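/- Biased global convergence equivalence: for any bias τ : V → ℝ≥0, the τ-biased synchronous update sends every state to the all-Glory state in one step if and only if the biased hub domination condition holds everywhere; formally, (∀ state s, ∀ vertex v, next_heaven^τ(s, v) = Glory) ⟺ (∀ v ≠ g, hub_weight(v) + τ(v) ≥ rest_weight(v)). -/

import Mathlib

open Finset

inductive Vote where
  | Glory
  | Gnash
deriving DecidableEq

variable {V : Type*} [Fintype V] [DecidableEq V]

/-- Influence of the hub `g` on `v`. -/
def hubWeight (w : V → V → NNReal) (g v : V) : NNReal := w g v

/-- Total influence of all non-hub vertices on `v`. -/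
def restWeight (w : V → V → NNReal) (g v : V) : NNReal :=
  ∑ u ∈ Finset.univ.filter (fun u => u ≠ g), w u v

/-- The hub-forced state: agrees with `s` off the hub and is `Glory` at the hub. -/
def forceG (g : V) (s : V → Vote) : V → Vote :=
  fun u => if u = g then Vote.Glory else s u

/-- Weighted score of opinion `X` at vertex `v` in state `s`. -/
def score (w : V → V → NNReal) (X : Vote) (s : V → Vote) (v : V) : NNReal :=
  ∑ u, w u v * (if s u = X then 1 else 0)

/-- Synchronous update rule. -/
noncomputable def nextHeaven (w : V → V → NNReal) (g : V) (s : V → Vote) (v : V) : Vote :=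
  if v = g then Vote.Glory
  else if score w Vote.Glory (forceG g s) v < score w Vote.Gnash (forceG g s) v then
    Vote.Gnash
  else Vote.Glory

/-- τ-biased synchronous update rule. -/
noncomputable def nextHeavenTau (w : V → V → NNReal) (g : V) (τ : V → NNReal) (s : V → Vote) (v : V) : Vote :=
  if v = g then Vote.Glory
  else if score w Vote.Glory (forceG g s) v + τ v < score w Vote.Gnash (forceG g s) v then
    Vote.Gnash
  else Vote.Glory

/-- The state assigning `Gnash` to every vertex. -/
def allGnash : V → Vote := fun _ => Vote.Gnash

/-- The state assigning `Glory` to every vertex. -/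
def allGlory : V → Vote := fun _ => Vote.Glory

/-- Asynchronous update at a single vertex. -/
noncomputable def asyncStep (w : V → V → NNReal) (g : V) (s : V → Vote) (u : V) : V → Vote :=
  Function.update s u (nextHeaven w g s u)

theorem biased_global_conv_equiv (w : V → V → NNReal) (g : V) (τ : V → NNReal) :
    (∀ (s : V → Vote) (v : V), nextHeavenTau w g τ s v = Vote.Glory) ↔
      (∀ v ≠ g, hubWeight w g v + τ v ≥ restWeight w g v) := by
  have hGn : ∀ (s : V → Vote) v, score w Vote.Gnash (forceG g s) v ≤ restWeight w g v := by
    intro s v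
    unfold score restWeight
    rw [← Finset.sum_filter_add_sum_filter_not Finset.univ (fun u => u ≠ g)
      (fun u => w u v * (if forceG g s u = Vote.Gnash then 1 else 0))]
    have h2 : ∑ u ∈ Finset.univ.filter (fun u => ¬ u ≠ g),
        w u v * (if forceG g s u = Vote.Gnash then 1 else 0) = 0 := by
      apply Finset.sum_eq_zero
      intro u hu
      simp only [Finset.mem_filter, not_not] at hu
      simp [forceG, hu.2]
    rw [h2, add_zero]
    apply Finset.sum_le_sum
    intro u hu
    split <;> simp
  have hGl : ∀ (s : V → Vote) v, hubWeight w g v ≤ score w Vote.Glory (forceG g s) v := by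
    intro s v
    unfold score hubWeight
    have := Finset.single_le_sum (f := fun u => w u v * (if forceG g s u = Vote.Glory then 1 else 0))
      (fun u _ => zero_le) (Finset.mem_univ g)
    simpa [forceG] using this
  constructor
  · intro h v hv
    have := h allGnash v
    unfold nextHeavenTau at this
    rw [if_neg hv] at this
    by_contra hlt
    push_neg at hlt
    rw [if_pos] at this
    · exact absurd this (by simp)
    calc score w Vote.Glory (forceG g allGnash) v + τ v
        = hubWeight w g v + τ v := by
          congr 1
          unfold score hubWeight
          rw [Finset.sum_eq_single g]
          · simp [forceG]
          · intro u _ hu; simp [forceG, hu, allGnash]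
          · simp
      _ < restWeight w g v := hlt
      _ = score w Vote.Gnash (forceG g allGnash) v := by
          unfold score restWeight
          rw [← Finset.sum_filter_add_sum_filter_not Finset.univ (fun u => u ≠ g)
            (fun u => w u v * (if forceG g allGnash u = Vote.Gnash then 1 else 0))]
          have h2 : ∑ u ∈ Finset.univ.filter (fun u => ¬ u ≠ g),
              w u v * (if forceG g allGnash u = Vote.Gnash then 1 else 0) = 0 := by
            apply Finset.sum_eq_zero
            intro u hu
            simp only [Finset.mem_filter, not_not] at hu
            simp [forceG, hu.2]
          rw [h2, add_zero]
          apply Finset.sum_congr rfl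
          intro u hu
          simp only [Finset.mem_filter] at hu
          simp [forceG, hu.2, allGnash]
  · intro h s v
    unfold nextHeavenTau
    by_cases hv : v = g
    · simp [hv]
    rw [if_neg hv, if_neg]
    push_neg
    calc score w Vote.Gnash (forceG g s) v ≤ restWeight w g v := hGn s v
      _ ≤ hubWeight w g v + τ v := h v hv
      _ ≤ score w Vote.Glory (forceG g s) v + τ v := add_le_add (hGl s v) le_rfl
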